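/- Let Θ ⊆ ℝ^d × ℝ be compact, let σ : ℝ → ℝ be m-times continuously differentiable with σ and each derivative σ^{(j)} (j ≤ m) Lipschitz (i.e. σ ∈ W^{m+1,∞}), and let D_σ = {x ↦ σ(ω·x + b) : (ω, b) ∈ Θ}. Then for every multi-index α with |α| ≤ m there is a constant c (independent of N) such that for every probability measure μ on ℝ^d with bounded support and every N ≥ 1, the Rademacher complexity satisfies R_N(∂^α D_σ) ≤ c · N^{−1/2}, where ∂^α D_σ = {x ↦ ω^α σ^{(|α|)}(ω·x + b) : (ω, b) ∈ Θ}. -/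

import Mathlib

open Finset Set

namespace RadAux

def eps {n : ℕ} (ξ : Fin n → Bool) (i : Fin n) : ℝ := if ξ i then 1 else -1

lemma abs_eps {n : ℕ} (ξ : Fin n → Bool) (i : Fin n) : |eps ξ i| = 1 := by
  unfold eps; split <;> norm_num

lemma eps_pm {n : ℕ} (ξ : Fin n → Bool) (i : Fin n) : eps ξ i = 1 ∨ eps ξ i = -1 := by
  unfold eps; split <;> simp

lemma eps_sq {n : ℕ} (ξ : Fin n → Bool) (i : Fin n) : eps ξ i * eps ξ i = 1 := by
  unfold eps; split <;> norm_num

def flip1 {n : ℕ} (j : Fin n) (ξ : Fin n → Bool) : Fin n → Bool := Function.update ξ j (!ξ j)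

lemma flip1_invol {n : ℕ} (j : Fin n) : Function.Involutive (flip1 j) := by
  intro ξ; unfold flip1; simp [Function.update_idem]

lemma sum_flip1 {n : ℕ} (j : Fin n) (g : (Fin n → Bool) → ℝ) :
    ∑ ξ : Fin n → Bool, g ξ = ∑ ξ : Fin n → Bool, g (flip1 j ξ) :=
  (Fintype.sum_bijective _ (flip1_invol j).bijective _ _ (fun _ => rfl)).symm

lemma sum_flipall {n : ℕ} (g : (Fin n → Bool) → ℝ) :
    ∑ ξ : Fin n → Bool, g ξ = ∑ ξ : Fin n → Bool, g (fun i => !ξ i) := by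
  have h : Function.Involutive (fun ξ : Fin n → Bool => fun i => !ξ i) := by
    intro ξ; simp
  exact (Fintype.sum_bijective _ h.bijective _ _ (fun _ => rfl)).symm

lemma eps_flip1_self {n : ℕ} (ξ : Fin n → Bool) (j : Fin n) : eps (flip1 j ξ) j = -eps ξ j := by
  unfold eps flip1; simp; cases h : ξ j <;> simp [h]

lemma eps_flip1_ne {n : ℕ} (ξ : Fin n → Bool) {i j : Fin n} (h : i ≠ j) :
    eps (flip1 j ξ) i = eps ξ i := by
  unfold eps flip1; rw [Function.update_of_ne h]

lemma eps_flipall {n : ℕ} (ξ : Fin n → Bool) (i : Fin n) :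
    eps (fun k => !ξ k) i = -eps ξ i := by
  unfold eps; cases h : ξ i <;> simp [h]

lemma sum_eps_mul {n : ℕ} {i k : Fin n} (h : i ≠ k) :
    ∑ ξ : Fin n → Bool, eps ξ i * eps ξ k = 0 := by
  have h1 := sum_flip1 i (fun ξ => eps ξ i * eps ξ k)
  have h2 : ∀ ξ : Fin n → Bool, eps (flip1 i ξ) i * eps (flip1 i ξ) k = -(eps ξ i * eps ξ k) := by
    intro ξ
    rw [eps_flip1_self, eps_flip1_ne ξ (Ne.symm h)]; ring
  simp only [h2, Finset.sum_neg_distrib] at h1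
  linarith

lemma orth {n : ℕ} (a : Fin n → ℝ) :
    ∑ ξ : Fin n → Bool, (∑ i, eps ξ i * a i) ^ 2 = 2 ^ n * ∑ i, a i ^ 2 := by
  have expand : ∀ ξ : Fin n → Bool, (∑ i, eps ξ i * a i) ^ 2
      = ∑ i, ∑ k, (eps ξ i * eps ξ k) * (a i * a k) := by
    intro ξ
    rw [sq, Finset.sum_mul_sum]
    exact Finset.sum_congr rfl fun i _ => Finset.sum_congr rfl fun k _ => by ring
  simp only [expand]
  rw [Finset.sum_comm]
  have key2 : ∀ i : Fin n, ∑ ξ : Fin n → Bool, ∑ k, (eps ξ i * eps ξ k) * (a i * a k)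
      = 2 ^ n * a i ^ 2 := by
    intro i
    rw [Finset.sum_comm]
    have key : ∀ k : Fin n, ∑ ξ : Fin n → Bool, (eps ξ i * eps ξ k) * (a i * a k)
        = if k = i then 2 ^ n * a i ^ 2 else 0 := by
      intro k
      rw [← Finset.sum_mul]
      by_cases hk : k = i
      · subst hk
        simp only [if_pos rfl, eps_sq]
        rw [Finset.sum_const]
        simp [Fintype.card_fun, sq]
      · rw [sum_eps_mul (Ne.symm hk)]
        simp [hk]
    simp only [key]
    rw [Finset.sum_ite_eq' Finset.univ i (fun _ => (2:ℝ) ^ n * a i ^ 2)]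
    simp
  simp only [key2]
  rw [← Finset.mul_sum]

lemma sum_abs_le {n : ℕ} (a : Fin n → ℝ) {Ma : ℝ} (hMa : 0 ≤ Ma) (hM : ∀ i, |a i| ≤ Ma) :
    ∑ ξ : Fin n → Bool, |∑ i, eps ξ i * a i| ≤ 2 ^ n * (Real.sqrt n * Ma) := by
  set S := ∑ ξ : Fin n → Bool, |∑ i, eps ξ i * a i| with hS
  have hS0 : 0 ≤ S := Finset.sum_nonneg fun _ _ => abs_nonneg _
  have hcs : S ^ 2 ≤ 2 ^ n * ∑ ξ : Fin n → Bool, (∑ i, eps ξ i * a i) ^ 2 := by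
    have := Finset.sum_mul_sq_le_sq_mul_sq Finset.univ
      (fun _ : Fin n → Bool => (1:ℝ)) (fun ξ => |∑ i, eps ξ i * a i|)
    simp only [one_mul, one_pow, Finset.sum_const, nsmul_eq_mul, sq_abs] at this
    simpa [hS, Fintype.card_fun] using this
  rw [orth] at hcs
  have hsum : ∑ i, a i ^ 2 ≤ n * Ma ^ 2 := by
    calc ∑ i, a i ^ 2 ≤ ∑ _i : Fin n, Ma ^ 2 := by
          apply Finset.sum_le_sum
          intro i _
          rw [← sq_abs]
          exact pow_le_pow_left₀ (abs_nonneg _) (hM i) 2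
      _ = n * Ma ^ 2 := by simp [Finset.sum_const]
  have h2 : S ^ 2 ≤ (2 ^ n * (Real.sqrt n * Ma)) ^ 2 := by
    have hq : Real.sqrt n ^ 2 = (n:ℝ) := Real.sq_sqrt (Nat.cast_nonneg n)
    have heq : (2 ^ n * (Real.sqrt n * Ma)) ^ 2 = 2^n * (2^n * ((n:ℝ) * Ma^2)) := by
      rw [mul_pow, mul_pow, hq]; ring
    rw [heq]
    refine le_trans hcs ?_
    gcongr
  have hR0 : 0 ≤ 2 ^ n * (Real.sqrt n * Ma) := by positivity
  exact (pow_le_pow_iff_left₀ hS0 hR0 two_ne_zero).mp h2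

lemma rad_sup_add_le {ι κ : Type*} [Nonempty ι] [Nonempty κ] (f : ι → ℝ) (g : κ → ℝ) (c : ℝ)
    (h : ∀ θ θ', f θ + g θ' ≤ c) : sSup (range f) + sSup (range g) ≤ c := by
  have h1 : sSup (range f) ≤ c - sSup (range g) := by
    apply csSup_le (range_nonempty f)
    rintro _ ⟨θ, rfl⟩
    rw [le_sub_iff_add_le, add_comm, ← le_sub_iff_add_le]
    apply csSup_le (range_nonempty g)
    rintro _ ⟨θ', rfl⟩
    linarith [h θ θ']
  linarith

lemma bddAbove_range_of_le {ι : Type*} (f : ι → ℝ) (c : ℝ) (h : ∀ θ, f θ ≤ c) :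
    BddAbove (range f) := ⟨c, by rintro _ ⟨θ, rfl⟩; exact h θ⟩

lemma key_core {ι : Type*} [Nonempty ι] (A u : ι → ℝ) (L : ℝ)
    (φ : ℝ → ℝ) (hφ : ∀ a b : ℝ, |φ a - φ b| ≤ L * |a - b|)
    (e : ℝ) (he : e = 1 ∨ e = -1)
    (h1 : BddAbove (range fun θ => A θ + L * u θ))
    (h2 : BddAbove (range fun θ => A θ - L * u θ)) :
    sSup (range fun θ => A θ + e * φ (u θ)) + sSup (range fun θ => A θ - e * φ (u θ))
      ≤ sSup (range fun θ => A θ + L * u θ) + sSup (range fun θ => A θ - L * u θ) := by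
  apply rad_sup_add_le
  intro θ θ'
  have habs : |e| = 1 := by rcases he with h | h <;> simp [h]
  have hlip : e * (φ (u θ) - φ (u θ')) ≤ L * |u θ - u θ'| := by
    calc e * (φ (u θ) - φ (u θ')) ≤ |e * (φ (u θ) - φ (u θ'))| := le_abs_self _
      _ = |φ (u θ) - φ (u θ')| := by rw [abs_mul, habs, one_mul]
      _ ≤ L * |u θ - u θ'| := hφ _ _
  rcases le_total (u θ') (u θ) with hc | hc
  · have habs2 : L * |u θ - u θ'| = L * u θ - L * u θ' := by
      rw [abs_of_nonneg (by linarith)]; ring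
    have hb1 : A θ + L * u θ ≤ sSup (range fun θ => A θ + L * u θ) := le_csSup h1 ⟨θ, rfl⟩
    have hb2 : A θ' - L * u θ' ≤ sSup (range fun θ => A θ - L * u θ) := le_csSup h2 ⟨θ', rfl⟩
    nlinarith [hlip, habs2]
  · have habs2 : L * |u θ - u θ'| = L * u θ' - L * u θ := by
      rw [abs_of_nonpos (by linarith)]; ring
    have hb1 : A θ' + L * u θ' ≤ sSup (range fun θ => A θ + L * u θ) := le_csSup h1 ⟨θ', rfl⟩
    have hb2 : A θ - L * u θ ≤ sSup (range fun θ => A θ - L * u θ) := le_csSup h2 ⟨θ, rfl⟩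
    nlinarith [hlip, habs2]

lemma sSup_range_const_mul {ι : Type*} [Nonempty ι] (a : ℝ) (ha : 0 ≤ a)
    (f : ι → ℝ) (c : ℝ) (hc : ∀ θ, f θ ≤ c) :
    sSup (range fun θ => a * f θ) = a * sSup (range f) := by
  have hbdd : BddAbove (range f) := bddAbove_range_of_le f c hc
  have hbdd2 : BddAbove (range fun θ => a * f θ) :=
    bddAbove_range_of_le _ (a * c) fun θ => mul_le_mul_of_nonneg_left (hc θ) ha
  rcases ha.eq_or_lt with h | h
  · rw [← h]
    simp
  · apply le_antisymm
    · apply csSup_le (range_nonempty _)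
      rintro _ ⟨θ, rfl⟩
      exact mul_le_mul_of_nonneg_left (le_csSup hbdd ⟨θ, rfl⟩) ha
    · rw [mul_comm, ← le_div_iff₀ h]
      apply csSup_le (range_nonempty f)
      rintro _ ⟨θ, rfl⟩
      rw [le_div_iff₀ h, mul_comm]
      exact le_csSup hbdd2 ⟨θ, rfl⟩

lemma contraction {n : ℕ} {ι : Type*} [Nonempty ι] (T : ι → Fin n → ℝ)
    (φ : ℝ → ℝ) (L : ℝ) (hL : 0 ≤ L) (hφ : ∀ a b : ℝ, |φ a - φ b| ≤ L * |a - b|)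
    (K : ℝ) (hK0 : 0 ≤ K) (hK : ∀ θ i, |T θ i| ≤ K) :
    ∑ ξ : Fin n → Bool, sSup (range fun θ => ∑ i, eps ξ i * φ (T θ i))
      ≤ ∑ ξ : Fin n → Bool, sSup (range fun θ => ∑ i, eps ξ i * (L * T θ i)) := by
  set D : ℝ := L * K + (|φ 0| + L * K) with hD
  have hD0 : 0 ≤ D := by positivity
  set G : Finset (Fin n) → (Fin n → Bool) → ι → ℝ :=
    fun s ξ θ => ∑ i, eps ξ i * (if i ∈ s then L * T θ i else φ (T θ i)) with hG
  have hterm : ∀ (s : Finset (Fin n)) (ξ : Fin n → Bool) (θ : ι) (i : Fin n),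
      |eps ξ i * (if i ∈ s then L * T θ i else φ (T θ i))| ≤ D := by
    intro s ξ θ i
    rw [abs_mul, abs_eps, one_mul]
    split
    · have : |L * T θ i| ≤ L * K := by
        rw [abs_mul, abs_of_nonneg hL]
        exact mul_le_mul_of_nonneg_left (hK θ i) hL
      have h0 : 0 ≤ |φ 0| + L * K := by positivity
      linarith
    · have h1 : |φ (T θ i)| ≤ |φ 0| + L * K := by
        have := hφ (T θ i) 0
        have h2 : |φ (T θ i)| - |φ 0| ≤ |φ (T θ i) - φ 0| := abs_sub_abs_le_abs_sub _ _
        have h3 : L * |T θ i - 0| ≤ L * K := by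
          rw [sub_zero]; exact mul_le_mul_of_nonneg_left (hK θ i) hL
        linarith
      have : (0:ℝ) ≤ L * K := by positivity
      linarith
  have hGle : ∀ (s : Finset (Fin n)) (ξ : Fin n → Bool) (θ : ι), G s ξ θ ≤ n * D := by
    intro s ξ θ
    calc G s ξ θ ≤ ∑ i : Fin n, D := by
          apply Finset.sum_le_sum
          intro i _
          exact le_trans (le_abs_self _) (hterm s ξ θ i)
      _ = n * D := by simp [Finset.sum_const, mul_comm]
  have hGbdd : ∀ (s : Finset (Fin n)) (ξ : Fin n → Bool), BddAbove (range (G s ξ)) :=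
    fun s ξ => bddAbove_range_of_le _ _ (hGle s ξ)
  -- main induction
  have main : ∀ s : Finset (Fin n),
      ∑ ξ : Fin n → Bool, sSup (range (G ∅ ξ)) ≤ ∑ ξ : Fin n → Bool, sSup (range (G s ξ)) := by
    intro s
    induction s using Finset.induction_on with
    | empty => exact le_refl _
    | @insert j s hj ih =>
      refine le_trans ih ?_
      -- pairing step
      have pair : ∀ ξ : Fin n → Bool,
          sSup (range (G s ξ)) + sSup (range (G s (flip1 j ξ)))
            ≤ sSup (range (G (insert j s) ξ)) + sSup (range (G (insert j s) (flip1 j ξ))) := by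
        intro ξ
        set e : ℝ := eps ξ j with he'
        set A : ι → ℝ := fun θ => ∑ i ∈ Finset.univ.erase j,
          eps ξ i * (if i ∈ s then L * T θ i else φ (T θ i)) with hA
        set u : ι → ℝ := fun θ => T θ j with hu
        have hGs : ∀ θ, G s ξ θ = A θ + e * φ (u θ) := by
          intro θ
          rw [hG]
          simp only []
          rw [← Finset.sum_erase_add _ _ (Finset.mem_univ j), if_neg hj]
        have hGsf : ∀ θ, G s (flip1 j ξ) θ = A θ - e * φ (u θ) := by
          intro θ
          rw [hG]
          simp only []
          rw [← Finset.sum_erase_add _ _ (Finset.mem_univ j), if_neg hj, eps_flip1_self]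
          rw [hA]
          have : ∀ i ∈ Finset.univ.erase j,
              eps (flip1 j ξ) i * (if i ∈ s then L * T θ i else φ (T θ i))
              = eps ξ i * (if i ∈ s then L * T θ i else φ (T θ i)) := by
            intro i hi
            rw [eps_flip1_ne ξ (Finset.ne_of_mem_erase hi)]
          rw [Finset.sum_congr rfl this]
          ring
        have hGs' : ∀ θ, G (insert j s) ξ θ = A θ + e * (L * u θ) := by
          intro θ
          rw [hG]
          simp only []
          rw [← Finset.sum_erase_add _ _ (Finset.mem_univ j), if_pos (Finset.mem_insert_self j s)]
          congr 1
          apply Finset.sum_congr rfl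
          intro i hi
          have hij : i ≠ j := Finset.ne_of_mem_erase hi
          simp [Finset.mem_insert, hij]
        have hGsf' : ∀ θ, G (insert j s) (flip1 j ξ) θ = A θ - e * (L * u θ) := by
          intro θ
          rw [hG]
          simp only []
          rw [← Finset.sum_erase_add _ _ (Finset.mem_univ j), if_pos (Finset.mem_insert_self j s),
            eps_flip1_self]
          rw [hA]
          have : ∀ i ∈ Finset.univ.erase j,
              eps (flip1 j ξ) i * (if i ∈ insert j s then L * T θ i else φ (T θ i))
              = eps ξ i * (if i ∈ s then L * T θ i else φ (T θ i)) := by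
            intro i hi
            have hij : i ≠ j := Finset.ne_of_mem_erase hi
            rw [eps_flip1_ne ξ hij]
            simp [Finset.mem_insert, hij]
          rw [Finset.sum_congr rfl this]
          ring
        have hbdd1 : BddAbove (range fun θ => A θ + L * u θ) := by
          apply bddAbove_range_of_le _ ((n:ℝ) * D + L * K)
          intro θ
          have hAle : A θ ≤ (n:ℝ) * D := by
            calc A θ ≤ ∑ i ∈ Finset.univ.erase j, D :=
                Finset.sum_le_sum fun i _ => le_trans (le_abs_self _) (hterm s ξ θ i)
              _ = (Finset.univ.erase j).card * D := by simp [Finset.sum_const, mul_comm]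
              _ ≤ (n:ℝ) * D := by
                  apply mul_le_mul_of_nonneg_right _ hD0
                  have := Finset.card_erase_le (a := j) (s := (Finset.univ : Finset (Fin n)))
                  have hcard : ((Finset.univ.erase j).card : ℝ) ≤ (Finset.univ : Finset (Fin n)).card := by
                    exact_mod_cast this
                  simpa using hcard
          have hLu : L * u θ ≤ L * K := by
            have := hK θ j
            have : u θ ≤ K := le_trans (le_abs_self _) (hK θ j)
            exact mul_le_mul_of_nonneg_left this hL
          linarith
        have hbdd2 : BddAbove (range fun θ => A θ - L * u θ) := by
          apply bddAbove_range_of_le _ ((n:ℝ) * D + L * K)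
          intro θ
          have hAle : A θ ≤ (n:ℝ) * D := by
            calc A θ ≤ ∑ i ∈ Finset.univ.erase j, D :=
                Finset.sum_le_sum fun i _ => le_trans (le_abs_self _) (hterm s ξ θ i)
              _ = (Finset.univ.erase j).card * D := by simp [Finset.sum_const, mul_comm]
              _ ≤ (n:ℝ) * D := by
                  apply mul_le_mul_of_nonneg_right _ hD0
                  have := Finset.card_erase_le (a := j) (s := (Finset.univ : Finset (Fin n)))
                  have hcard : ((Finset.univ.erase j).card : ℝ) ≤ (Finset.univ : Finset (Fin n)).card := by
                    exact_mod_cast this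
                  simpa using hcard
          have hLu : -(L * u θ) ≤ L * K := by
            have h1 : -u θ ≤ K := le_trans (neg_le_abs _) (hK θ j)
            have := mul_le_mul_of_nonneg_left h1 hL
            linarith
          linarith
        have hkey := key_core A u L φ hφ e (eps_pm ξ j) hbdd1 hbdd2
        have hrw1 : (range (G s ξ)) = (range fun θ => A θ + e * φ (u θ)) := by
          rw [funext hGs]
        have hrw2 : (range (G s (flip1 j ξ))) = (range fun θ => A θ - e * φ (u θ)) := by
          rw [funext hGsf]
        rw [hrw1, hrw2]
        refine le_trans hkey ?_
        have hrw3 : (range (G (insert j s) ξ)) = (range fun θ => A θ + e * (L * u θ)) := by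
          rw [funext hGs']
        have hrw4 : (range (G (insert j s) (flip1 j ξ))) = (range fun θ => A θ - e * (L * u θ)) := by
          rw [funext hGsf']
        rw [hrw3, hrw4]
        rcases eps_pm ξ j with h | h
        · have e1 : (fun θ => A θ + e * (L * u θ)) = fun θ => A θ + L * u θ := by
            funext θ; rw [← he'] at h; rw [h]; ring
          have e2 : (fun θ => A θ - e * (L * u θ)) = fun θ => A θ - L * u θ := by
            funext θ; rw [← he'] at h; rw [h]; ring
          rw [e1, e2]
        · have e1 : (fun θ => A θ + e * (L * u θ)) = fun θ => A θ - L * u θ := by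
            funext θ; rw [← he'] at h; rw [h]; ring
          have e2 : (fun θ => A θ - e * (L * u θ)) = fun θ => A θ + L * u θ := by
            funext θ; rw [← he'] at h; rw [h]; ring
          rw [e1, e2, add_comm]
      -- sum the pairing
      have h2 : (2:ℝ) * ∑ ξ : Fin n → Bool, sSup (range (G s ξ))
          ≤ 2 * ∑ ξ : Fin n → Bool, sSup (range (G (insert j s) ξ)) := by
        have lhs : (2:ℝ) * ∑ ξ : Fin n → Bool, sSup (range (G s ξ))
            = ∑ ξ : Fin n → Bool, (sSup (range (G s ξ)) + sSup (range (G s (flip1 j ξ)))) := by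
          rw [Finset.sum_add_distrib, ← sum_flip1 j (fun ξ => sSup (range (G s ξ)))]
          ring
        have rhs : (2:ℝ) * ∑ ξ : Fin n → Bool, sSup (range (G (insert j s) ξ))
            = ∑ ξ : Fin n → Bool, (sSup (range (G (insert j s) ξ)) + sSup (range (G (insert j s) (flip1 j ξ)))) := by
          rw [Finset.sum_add_distrib, ← sum_flip1 j (fun ξ => sSup (range (G (insert j s) ξ)))]
          ring
        rw [lhs, rhs]
        exact Finset.sum_le_sum fun ξ _ => pair ξ
      linarith
  have hfin := main Finset.univ
  have hempty : ∀ ξ : Fin n → Bool, G ∅ ξ = fun θ => ∑ i, eps ξ i * φ (T θ i) := by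
    intro ξ; funext θ; rw [hG]; simp
  have huniv : ∀ ξ : Fin n → Bool, G Finset.univ ξ = fun θ => ∑ i, eps ξ i * (L * T θ i) := by
    intro ξ; funext θ; rw [hG]; simp
  calc ∑ ξ : Fin n → Bool, sSup (range fun θ => ∑ i, eps ξ i * φ (T θ i))
      = ∑ ξ : Fin n → Bool, sSup (range (G ∅ ξ)) := by
        apply Finset.sum_congr rfl; intro ξ _; rw [hempty ξ]
    _ ≤ ∑ ξ : Fin n → Bool, sSup (range (G Finset.univ ξ)) := hfin
    _ = ∑ ξ : Fin n → Bool, sSup (range fun θ => ∑ i, eps ξ i * (L * T θ i)) := by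
        apply Finset.sum_congr rfl; intro ξ _; rw [huniv ξ]

end RadAux

open RadAux


open MeasureTheory Set

noncomputable section

/-- The empirical Rademacher complexity
`R̂_N(F; x) = 2^{−N} ∑_{ξ∈{−1,1}^N} sup_{h∈F} (1/N) ∑_i ξ_i h(x_i)`. -/
def empRad {Ω : Type*} (N : ℕ) (F : Set (Ω → ℝ)) (x : Fin N → Ω) : ℝ :=
  (2 ^ N : ℝ)⁻¹ * ∑ ξ : Fin N → Bool,
    sSup ((fun h : Ω → ℝ =>
      (N : ℝ)⁻¹ * ∑ i, (if ξ i then (1 : ℝ) else -1) * h (x i)) '' F)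

/-- The Rademacher complexity `R_N(F) = E_{x₁,…,x_N iid ∼ μ}[R̂_N(F; x)]`. -/
def RadN {Ω : Type*} [MeasurableSpace Ω] (μ : Measure Ω) [SigmaFinite μ] (N : ℕ)
    (F : Set (Ω → ℝ)) : ℝ :=
  ∫ x : Fin N → Ω, empRad N F x ∂(Measure.pi fun _ => μ)

/-- **`N^{−1/2}` Rademacher complexity bound for derivatives of shallow neural network
dictionaries.** Let `Θ ⊆ ℝ^d × ℝ` be compact and `σ : ℝ → ℝ` be `m`-times continuously
differentiable with `σ` and each derivative `σ^{(j)}` (`j ≤ m`) Lipschitz (i.e.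
`σ ∈ W^{m+1,∞}`), and let `𝔻_σ = {x ↦ σ(ω·x + b) : (ω, b) ∈ Θ}`. Then for every
multi-index `α` with `|α| ≤ m` and every support radius `R`, there is a constant `c`
(independent of `N`) such that for every probability measure `μ` on `ℝ^d` supported in the
ball of radius `R` and every `N ≥ 1`, `R_N(∂^α 𝔻_σ) ≤ c·N^{−1/2}`, where
`∂^α 𝔻_σ = {x ↦ ω^α σ^{(|α|)}(ω·x + b) : (ω, b) ∈ Θ}`. -/
theorem rademacher_bound_nn_dictionary_derivatives
    (d m : ℕ)
    (Θ : Set ((Fin d → ℝ) × ℝ)) (hΘ : IsCompact Θ)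
    (σ : ℝ → ℝ) (hσ : ContDiff ℝ m σ)
    (hLip : ∀ j : ℕ, j ≤ m → ∃ Lj : NNReal, LipschitzWith Lj (iteratedDeriv j σ))
    (α : Fin d → ℕ) (hα : (∑ i, α i) ≤ m) (R : ℝ) :
    ∃ c : ℝ, ∀ (μ : Measure (Fin d → ℝ)) (_hprob : IsProbabilityMeasure μ)
      (_hsupp : ∀ᵐ x ∂μ, ‖x‖ ≤ R),
      ∀ N : ℕ, 1 ≤ N →
        RadN μ N ((fun p : (Fin d → ℝ) × ℝ => fun x : Fin d → ℝ =>
            (∏ i, p.1 i ^ α i) * iteratedDeriv (∑ i, α i) σ ((∑ i, p.1 i * x i) + p.2)) '' Θ)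
          ≤ c / Real.sqrt N := by
  classical
  obtain ⟨L, hLipk⟩ := hLip (∑ i, α i) hα
  set φ : ℝ → ℝ := iteratedDeriv (∑ i, α i) σ with hφdef
  have hφlip : ∀ a b : ℝ, |φ a - φ b| ≤ (L:ℝ) * |a - b| := by
    intro a b
    have := hLipk.dist_le_mul a b
    simpa [Real.dist_eq] using this
  have hL0 : (0:ℝ) ≤ L := L.coe_nonneg
  rcases Θ.eq_empty_or_nonempty with hem | hne
  · refine ⟨0, fun μ hprob hsupp N hN => ?_⟩
    have hzero : ∀ x : Fin N → (Fin d → ℝ),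
        empRad N ((fun p : (Fin d → ℝ) × ℝ => fun x : Fin d → ℝ =>
            (∏ i, p.1 i ^ α i) * iteratedDeriv (∑ i, α i) σ ((∑ i, p.1 i * x i) + p.2)) '' Θ) x
          = 0 := by
      intro x
      rw [hem]
      simp [empRad, Set.image_empty, Real.sSup_empty]
    unfold RadN
    rw [integral_congr_ae (Filter.Eventually.of_forall hzero), integral_zero]
    positivity
  · have hneI : Nonempty ↥Θ := hne.to_subtype
    obtain ⟨B₀, hB₀⟩ := hΘ.isBounded.exists_norm_le
    set B := max B₀ 1 with hBdef
    have hB1 : (1:ℝ) ≤ B := le_max_right _ _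
    have hB0 : (0:ℝ) ≤ B := by linarith
    have hBb : ∀ p ∈ Θ, ‖p‖ ≤ B := fun p hp => le_trans (hB₀ p hp) (le_max_left _ _)
    set R' := max R 0 with hR'def
    have hR'0 : (0:ℝ) ≤ R' := le_max_right R 0
    set U : ℝ := B * (d * R' + 1) with hUdef
    have hU0 : 0 ≤ U := by positivity
    set M : ℝ := |φ 0| + L * U with hMdef
    have hM0 : 0 ≤ M := by positivity
    set C : ℝ := B ^ (∑ i, α i) with hCdef
    have hC0 : 0 ≤ C := by positivity
    set c : ℝ := 2 * C * ((L:ℝ) * B * ((d:ℝ) * R' + 1) + M) with hcdef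
    have hc0 : 0 ≤ c := by positivity
    refine ⟨c, fun μ hprob hsupp N hN => ?_⟩
    set F : Set ((Fin d → ℝ) → ℝ) := ((fun p : (Fin d → ℝ) × ℝ => fun x : Fin d → ℝ =>
            (∏ i, p.1 i ^ α i) * iteratedDeriv (∑ i, α i) σ ((∑ i, p.1 i * x i) + p.2)) '' Θ)
      with hFdef
    have hN0 : (0:ℝ) < N := by exact_mod_cast Nat.lt_of_lt_of_le Nat.zero_lt_one hN
    have hsq : Real.sqrt N * Real.sqrt N = (N:ℝ) := Real.mul_self_sqrt (le_of_lt hN0)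
    have hsqpos : 0 < Real.sqrt N := Real.sqrt_pos.mpr hN0
    -- pointwise bound
    have hpt : ∀ x : Fin N → (Fin d → ℝ), (∀ i, ‖x i‖ ≤ R) →
        empRad N F x ≤ c / Real.sqrt N := by
      intro x hx
      have hx' : ∀ i j, |x i j| ≤ R' := by
        intro i j
        calc |x i j| = ‖x i j‖ := (Real.norm_eq_abs _).symm
          _ ≤ ‖x i‖ := norm_le_pi_norm (x i) j
          _ ≤ R := hx i
          _ ≤ R' := le_max_left R 0
      set uu : ↥Θ → Fin N → ℝ := fun θ i => (∑ j, (θ : (Fin d → ℝ) × ℝ).1 j * x i j)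
        + (θ : (Fin d → ℝ) × ℝ).2 with huudef
      set cc : ↥Θ → ℝ := fun θ => ∏ j, (θ : (Fin d → ℝ) × ℝ).1 j ^ α j with hccdef
      have hωb : ∀ (θ : ↥Θ) (j : Fin d), |(θ : (Fin d → ℝ) × ℝ).1 j| ≤ B := by
        intro θ j
        calc |(θ : (Fin d → ℝ) × ℝ).1 j| = ‖(θ : (Fin d → ℝ) × ℝ).1 j‖ := (Real.norm_eq_abs _).symm
          _ ≤ ‖(θ : (Fin d → ℝ) × ℝ).1‖ := norm_le_pi_norm _ j
          _ ≤ ‖(θ : (Fin d → ℝ) × ℝ)‖ := norm_fst_le _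
          _ ≤ B := hBb _ θ.2
      have hbb : ∀ θ : ↥Θ, |(θ : (Fin d → ℝ) × ℝ).2| ≤ B := by
        intro θ
        calc |(θ : (Fin d → ℝ) × ℝ).2| = ‖(θ : (Fin d → ℝ) × ℝ).2‖ := (Real.norm_eq_abs _).symm
          _ ≤ ‖(θ : (Fin d → ℝ) × ℝ)‖ := norm_snd_le _
          _ ≤ B := hBb _ θ.2
      have huub : ∀ (θ : ↥Θ) (i : Fin N), |uu θ i| ≤ U := by
        intro θ i
        have h1 : |∑ j, (θ : (Fin d → ℝ) × ℝ).1 j * x i j| ≤ (d:ℝ) * (B * R') := by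
          calc |∑ j, (θ : (Fin d → ℝ) × ℝ).1 j * x i j|
              ≤ ∑ j, |(θ : (Fin d → ℝ) × ℝ).1 j * x i j| := Finset.abs_sum_le_sum_abs _ _
            _ ≤ ∑ _j : Fin d, B * R' := by
                apply Finset.sum_le_sum
                intro j _
                rw [abs_mul]
                exact mul_le_mul (hωb θ j) (hx' i j) (abs_nonneg _) hB0
            _ = (d:ℝ) * (B * R') := by simp [Finset.sum_const, mul_comm]
        calc |uu θ i| ≤ |∑ j, (θ : (Fin d → ℝ) × ℝ).1 j * x i j|
              + |(θ : (Fin d → ℝ) × ℝ).2| := abs_add_le _ _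
          _ ≤ (d:ℝ) * (B * R') + B := add_le_add h1 (hbb θ)
          _ = U := by rw [hUdef]; ring
      have hccb : ∀ θ : ↥Θ, |cc θ| ≤ C := by
        intro θ
        rw [hccdef, hCdef]
        calc |∏ j, (θ : (Fin d → ℝ) × ℝ).1 j ^ α j|
            = ∏ j, |(θ : (Fin d → ℝ) × ℝ).1 j| ^ α j := by
              rw [Finset.abs_prod]
              exact Finset.prod_congr rfl fun j _ => abs_pow _ _
          _ ≤ ∏ j, B ^ α j := by
              apply Finset.prod_le_prod
              · intro j _; positivity
              · intro j _; exact pow_le_pow_left₀ (abs_nonneg _) (hωb θ j) _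
          _ = B ^ (∑ j, α j) := Finset.prod_pow_eq_pow_sum _ _ _
      have hφb : ∀ t : ℝ, |t| ≤ U → |φ t| ≤ M := by
        intro t ht
        have h1 : |φ t - φ 0| ≤ (L:ℝ) * |t - 0| := hφlip t 0
        rw [sub_zero] at h1
        have h2 : |φ t| - |φ 0| ≤ |φ t - φ 0| := abs_sub_abs_le_abs_sub _ _
        have h3 : (L:ℝ) * |t| ≤ L * U := mul_le_mul_of_nonneg_left ht hL0
        rw [hMdef]
        linarith
      set V : (Fin N → Bool) → ↥Θ → ℝ := fun ξ θ => ∑ i, eps ξ i * φ (uu θ i) with hVdef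
      have hVb : ∀ ξ θ, |V ξ θ| ≤ (N:ℝ) * M := by
        intro ξ θ
        calc |V ξ θ| ≤ ∑ i, |eps ξ i * φ (uu θ i)| := Finset.abs_sum_le_sum_abs _ _
          _ ≤ ∑ _i : Fin N, M := by
              apply Finset.sum_le_sum
              intro i _
              rw [abs_mul, abs_eps, one_mul]
              exact hφb _ (huub θ i)
          _ = (N:ℝ) * M := by simp [Finset.sum_const, mul_comm]
      have hVbdd : ∀ ξ, BddAbove (range (V ξ)) := fun ξ =>
        bddAbove_range_of_le _ ((N:ℝ) * M) fun θ => le_trans (le_abs_self _) (hVb ξ θ)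
      set W : (Fin N → Bool) → ↥Θ → ℝ := fun ξ θ => ∑ i, eps ξ i * (cc θ * φ (uu θ i))
        with hWdef
      have hWV : ∀ ξ θ, W ξ θ = cc θ * V ξ θ := by
        intro ξ θ
        rw [hWdef, hVdef]
        simp only []
        rw [Finset.mul_sum]
        exact Finset.sum_congr rfl fun i _ => by ring
      have hWb : ∀ ξ θ, W ξ θ ≤ (N:ℝ) * (C * M) := by
        intro ξ θ
        rw [hWV]
        calc cc θ * V ξ θ ≤ |cc θ| * |V ξ θ| := le_trans (le_abs_self _) (le_of_eq (abs_mul _ _))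
          _ ≤ C * ((N:ℝ) * M) := mul_le_mul (hccb θ) (hVb ξ θ) (abs_nonneg _) hC0
          _ = (N:ℝ) * (C * M) := by ring
      set Q : (Fin N → Bool) → ℝ := fun ξ => max (sSup (range (V ξ))) 0 with hQdef
      have hQ0 : ∀ ξ, 0 ≤ Q ξ := fun ξ => le_max_right _ _
      have hVflip : ∀ (ξ : Fin N → Bool) (θ : ↥Θ), V (fun i => !ξ i) θ = -V ξ θ := by
        intro ξ θ
        rw [hVdef]
        simp only [eps_flipall, neg_mul, Finset.sum_neg_distrib]
      -- step 1
      have step1 : ∀ ξ, sSup (range (W ξ)) ≤ C * (Q ξ + Q (fun i => !ξ i)) := by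
        intro ξ
        apply csSup_le (range_nonempty _)
        rintro _ ⟨θ, rfl⟩
        rw [hWV]
        have h1 : V ξ θ ≤ Q ξ :=
          le_trans (le_csSup (hVbdd ξ) ⟨θ, rfl⟩) (le_max_left _ _)
        have h2 : -V ξ θ ≤ Q (fun i => !ξ i) := by
          rw [← hVflip ξ θ]
          exact le_trans (le_csSup (hVbdd _) ⟨θ, rfl⟩) (le_max_left _ _)
        have habsV : |V ξ θ| ≤ Q ξ + Q (fun i => !ξ i) := by
          apply abs_le.mpr
          constructor
          · have := hQ0 ξ; linarith
          · have := hQ0 (fun i => !ξ i); linarith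
        calc cc θ * V ξ θ ≤ |cc θ| * |V ξ θ| := le_trans (le_abs_self _) (le_of_eq (abs_mul _ _))
          _ ≤ C * (Q ξ + Q (fun i => !ξ i)) := by
              apply mul_le_mul (hccb θ) habsV (abs_nonneg _) hC0
      -- step 2
      have step2 : ∑ ξ : Fin N → Bool, sSup (range (W ξ))
          ≤ C * (2 * ∑ ξ : Fin N → Bool, Q ξ) := by
        calc ∑ ξ : Fin N → Bool, sSup (range (W ξ))
            ≤ ∑ ξ : Fin N → Bool, C * (Q ξ + Q (fun i => !ξ i)) :=
              Finset.sum_le_sum fun ξ _ => step1 ξ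
          _ = C * (∑ ξ : Fin N → Bool, Q ξ + ∑ ξ : Fin N → Bool, Q (fun i => !ξ i)) := by
              rw [← Finset.mul_sum, Finset.sum_add_distrib]
          _ = C * (2 * ∑ ξ : Fin N → Bool, Q ξ) := by
              rw [← sum_flipall (fun ξ => Q ξ)]
              ring
      set θ₀ : ↥Θ := Classical.arbitrary ↥Θ with hθ₀
      have step3 : ∀ ξ, Q ξ ≤ sSup (range (V ξ)) + |V ξ θ₀| := by
        intro ξ
        apply max_le
        · exact le_add_of_nonneg_right (abs_nonneg _)
        · have h1 : V ξ θ₀ ≤ sSup (range (V ξ)) := le_csSup (hVbdd ξ) ⟨θ₀, rfl⟩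
          have h2 : -|V ξ θ₀| ≤ V ξ θ₀ := neg_abs_le _
          linarith
      have step4 : ∑ ξ : Fin N → Bool, |V ξ θ₀| ≤ 2 ^ N * (Real.sqrt N * M) := by
        have := sum_abs_le (fun i => φ (uu θ₀ i)) hM0 (fun i => hφb _ (huub θ₀ i))
        exact this
      have step5 : ∑ ξ : Fin N → Bool, sSup (range (V ξ))
          ≤ ∑ ξ : Fin N → Bool, sSup (range fun θ => ∑ i, eps ξ i * ((L:ℝ) * uu θ i)) :=
        contraction uu φ (L:ℝ) hL0 hφlip U hU0 huub
      have step6 : ∀ ξ : Fin N → Bool,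
          sSup (range fun θ : ↥Θ => ∑ i, eps ξ i * ((L:ℝ) * uu θ i))
            ≤ (L:ℝ) * B * ((∑ j, |∑ i, eps ξ i * x i j|) + |∑ i, eps ξ i * 1|) := by
        intro ξ
        apply csSup_le (range_nonempty _)
        rintro _ ⟨θ, rfl⟩
        dsimp only
        have hper : ∀ i, eps ξ i * ((L:ℝ) * uu θ i)
            = (L:ℝ) * (∑ j, (θ : (Fin d → ℝ) × ℝ).1 j * (eps ξ i * x i j))
              + (L:ℝ) * ((θ : (Fin d → ℝ) × ℝ).2 * (eps ξ i * 1)) := by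
          intro i
          have h1 : eps ξ i * (∑ j, (θ : (Fin d → ℝ) × ℝ).1 j * x i j)
              = ∑ j, (θ : (Fin d → ℝ) × ℝ).1 j * (eps ξ i * x i j) := by
            rw [Finset.mul_sum]
            exact Finset.sum_congr rfl fun j _ => by ring
          simp only [huudef]
          calc eps ξ i * ((L:ℝ) * ((∑ j, (θ : (Fin d → ℝ) × ℝ).1 j * x i j)
                + (θ : (Fin d → ℝ) × ℝ).2))
              = (L:ℝ) * (eps ξ i * (∑ j, (θ : (Fin d → ℝ) × ℝ).1 j * x i j))
                + (L:ℝ) * ((θ : (Fin d → ℝ) × ℝ).2 * (eps ξ i * 1)) := by ring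
            _ = _ := by rw [h1]
        have expand : ∑ i, eps ξ i * ((L:ℝ) * uu θ i)
            = (L:ℝ) * ((∑ j, (θ : (Fin d → ℝ) × ℝ).1 j * (∑ i, eps ξ i * x i j))
              + (θ : (Fin d → ℝ) × ℝ).2 * (∑ i, eps ξ i * 1)) := by
          calc ∑ i, eps ξ i * ((L:ℝ) * uu θ i)
              = ∑ i, ((L:ℝ) * (∑ j, (θ : (Fin d → ℝ) × ℝ).1 j * (eps ξ i * x i j))
                + (L:ℝ) * ((θ : (Fin d → ℝ) × ℝ).2 * (eps ξ i * 1))) :=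
                Finset.sum_congr rfl fun i _ => hper i
            _ = (L:ℝ) * (∑ i, ∑ j, (θ : (Fin d → ℝ) × ℝ).1 j * (eps ξ i * x i j))
                + (L:ℝ) * ((θ : (Fin d → ℝ) × ℝ).2 * ∑ i, (eps ξ i * 1)) := by
                rw [Finset.sum_add_distrib, ← Finset.mul_sum, ← Finset.mul_sum, ← Finset.mul_sum]
            _ = (L:ℝ) * (∑ j, (θ : (Fin d → ℝ) × ℝ).1 j * (∑ i, eps ξ i * x i j))
                + (L:ℝ) * ((θ : (Fin d → ℝ) × ℝ).2 * ∑ i, (eps ξ i * 1)) := by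
                rw [Finset.sum_comm]
                congr 2
                exact Finset.sum_congr rfl fun j _ => (Finset.mul_sum _ _ _).symm
            _ = (L:ℝ) * ((∑ j, (θ : (Fin d → ℝ) × ℝ).1 j * (∑ i, eps ξ i * x i j))
                + (θ : (Fin d → ℝ) × ℝ).2 * (∑ i, eps ξ i * 1)) := by ring
        rw [expand]
        have hT1 : (∑ j, (θ : (Fin d → ℝ) × ℝ).1 j * (∑ i, eps ξ i * x i j))
            ≤ B * ∑ j, |∑ i, eps ξ i * x i j| := by
          rw [Finset.mul_sum]
          apply Finset.sum_le_sum
          intro j _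
          calc (θ : (Fin d → ℝ) × ℝ).1 j * (∑ i, eps ξ i * x i j)
              ≤ |(θ : (Fin d → ℝ) × ℝ).1 j| * |∑ i, eps ξ i * x i j| :=
                le_trans (le_abs_self _) (le_of_eq (abs_mul _ _))
            _ ≤ B * |∑ i, eps ξ i * x i j| :=
                mul_le_mul_of_nonneg_right (hωb θ j) (abs_nonneg _)
        have hT2 : (θ : (Fin d → ℝ) × ℝ).2 * (∑ i, eps ξ i * 1) ≤ B * |∑ i, eps ξ i * 1| := by
          calc (θ : (Fin d → ℝ) × ℝ).2 * (∑ i, eps ξ i * 1)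
              ≤ |(θ : (Fin d → ℝ) × ℝ).2| * |∑ i, eps ξ i * 1| :=
                le_trans (le_abs_self _) (le_of_eq (abs_mul _ _))
            _ ≤ B * |∑ i, eps ξ i * 1| := mul_le_mul_of_nonneg_right (hbb θ) (abs_nonneg _)
        calc (L:ℝ) * ((∑ j, (θ : (Fin d → ℝ) × ℝ).1 j * (∑ i, eps ξ i * x i j))
              + (θ : (Fin d → ℝ) × ℝ).2 * (∑ i, eps ξ i * 1))
            ≤ (L:ℝ) * (B * ∑ j, |∑ i, eps ξ i * x i j| + B * |∑ i, eps ξ i * 1|) := by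
              apply mul_le_mul_of_nonneg_left (add_le_add hT1 hT2) hL0
          _ = (L:ℝ) * B * ((∑ j, |∑ i, eps ξ i * x i j|) + |∑ i, eps ξ i * 1|) := by ring
      have step7 : ∑ ξ : Fin N → Bool,
          ((∑ j, |∑ i, eps ξ i * x i j|) + |∑ i, eps ξ i * 1|)
            ≤ 2 ^ N * (Real.sqrt N * ((d:ℝ) * R' + 1)) := by
        rw [Finset.sum_add_distrib]
        have h1 : ∑ ξ : Fin N → Bool, ∑ j, |∑ i, eps ξ i * x i j|
            ≤ (d:ℝ) * (2 ^ N * (Real.sqrt N * R')) := by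
          rw [Finset.sum_comm]
          calc ∑ j, ∑ ξ : Fin N → Bool, |∑ i, eps ξ i * x i j|
              ≤ ∑ _j : Fin d, 2 ^ N * (Real.sqrt N * R') := by
                apply Finset.sum_le_sum
                intro j _
                exact sum_abs_le (fun i => x i j) hR'0 (fun i => hx' i j)
            _ = (d:ℝ) * (2 ^ N * (Real.sqrt N * R')) := by simp [Finset.sum_const, mul_comm]
        have h2 : ∑ ξ : Fin N → Bool, |∑ i, eps ξ i * 1|
            ≤ 2 ^ N * (Real.sqrt N * 1) :=
          sum_abs_le (fun _ => (1:ℝ)) zero_le_one (fun _ => by norm_num)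
        calc ∑ ξ : Fin N → Bool, ∑ j, |∑ i, eps ξ i * x i j|
              + ∑ ξ : Fin N → Bool, |∑ i, eps ξ i * 1|
            ≤ (d:ℝ) * (2 ^ N * (Real.sqrt N * R')) + 2 ^ N * (Real.sqrt N * 1) :=
              add_le_add h1 h2
          _ = 2 ^ N * (Real.sqrt N * ((d:ℝ) * R' + 1)) := by ring
      -- combine
      have combine : ∑ ξ : Fin N → Bool, sSup (range (W ξ))
          ≤ 2 ^ N * (Real.sqrt N * c) := by
        have hA : ∑ ξ : Fin N → Bool, Q ξ
            ≤ ∑ ξ : Fin N → Bool, sSup (range (V ξ)) + 2 ^ N * (Real.sqrt N * M) := by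
          calc ∑ ξ : Fin N → Bool, Q ξ
              ≤ ∑ ξ : Fin N → Bool, (sSup (range (V ξ)) + |V ξ θ₀|) :=
                Finset.sum_le_sum fun ξ _ => step3 ξ
            _ = ∑ ξ : Fin N → Bool, sSup (range (V ξ)) + ∑ ξ : Fin N → Bool, |V ξ θ₀| :=
                Finset.sum_add_distrib
            _ ≤ _ := by linarith [step4]
        have hB' : ∑ ξ : Fin N → Bool, sSup (range (V ξ))
            ≤ 2 ^ N * (Real.sqrt N * ((L:ℝ) * B * ((d:ℝ) * R' + 1))) := by
          refine le_trans step5 ?_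
          calc ∑ ξ : Fin N → Bool, sSup (range fun θ => ∑ i, eps ξ i * ((L:ℝ) * uu θ i))
              ≤ ∑ ξ : Fin N → Bool,
                  (L:ℝ) * B * ((∑ j, |∑ i, eps ξ i * x i j|) + |∑ i, eps ξ i * 1|) :=
                Finset.sum_le_sum fun ξ _ => step6 ξ
            _ = (L:ℝ) * B * ∑ ξ : Fin N → Bool,
                  ((∑ j, |∑ i, eps ξ i * x i j|) + |∑ i, eps ξ i * 1|) := by
                rw [Finset.mul_sum]
            _ ≤ (L:ℝ) * B * (2 ^ N * (Real.sqrt N * ((d:ℝ) * R' + 1))) := by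
                apply mul_le_mul_of_nonneg_left step7 (by positivity)
            _ = 2 ^ N * (Real.sqrt N * ((L:ℝ) * B * ((d:ℝ) * R' + 1))) := by ring
        calc ∑ ξ : Fin N → Bool, sSup (range (W ξ))
            ≤ C * (2 * ∑ ξ : Fin N → Bool, Q ξ) := step2
          _ ≤ C * (2 * (2 ^ N * (Real.sqrt N * ((L:ℝ) * B * ((d:ℝ) * R' + 1)))
              + 2 ^ N * (Real.sqrt N * M))) := by
              apply mul_le_mul_of_nonneg_left _ hC0
              linarith [hA, hB']
          _ = 2 ^ N * (Real.sqrt N * c) := by rw [hcdef]; ring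
      -- rewrite empRad
      have hrw : empRad N F x = (2 ^ N : ℝ)⁻¹ * ∑ ξ : Fin N → Bool,
          ((N:ℝ)⁻¹ * sSup (range (W ξ))) := by
        unfold empRad
        congr 1
        apply Finset.sum_congr rfl
        intro ξ _
        have him : ((fun h : (Fin d → ℝ) → ℝ =>
            (N:ℝ)⁻¹ * ∑ i, (if ξ i then (1:ℝ) else -1) * h (x i)) '' F)
            = range (fun θ : ↥Θ => (N:ℝ)⁻¹ * W ξ θ) := by
          rw [hFdef, Set.image_image, Set.image_eq_range]
          rfl
        rw [him, sSup_range_const_mul _ (by positivity : (0:ℝ) ≤ (N:ℝ)⁻¹)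
          (W ξ) ((N:ℝ) * (C * M)) (hWb ξ)]
      rw [hrw, ← Finset.mul_sum]
      have hfinal : (2 ^ N : ℝ)⁻¹ * ((N:ℝ)⁻¹ * ∑ ξ : Fin N → Bool, sSup (range (W ξ)))
          ≤ (2 ^ N : ℝ)⁻¹ * ((N:ℝ)⁻¹ * (2 ^ N * (Real.sqrt N * c))) := by
        apply mul_le_mul_of_nonneg_left _ (by positivity)
        apply mul_le_mul_of_nonneg_left combine (by positivity)
      refine le_trans hfinal (le_of_eq ?_)
      have hsne : Real.sqrt N ≠ 0 := ne_of_gt hsqpos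
      have h2 : ((2:ℝ) ^ N) ≠ 0 := by positivity
      rw [show ((N:ℝ))⁻¹ = (Real.sqrt N * Real.sqrt N)⁻¹ from by rw [hsq]]
      field_simp
    -- integral part
    have hGnull : μ {y : Fin d → ℝ | ¬ ‖y‖ ≤ R} = 0 := ae_iff.mp hsupp
    have hae : ∀ᵐ x ∂(Measure.pi fun _ : Fin N => μ), ∀ i, ‖x i‖ ≤ R := by
      rw [MeasureTheory.ae_all_iff]
      intro i
      rw [ae_iff]
      have hset : {x : Fin N → (Fin d → ℝ) | ¬ ‖x i‖ ≤ R}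
          = Function.eval i ⁻¹' {y : Fin d → ℝ | ¬ ‖y‖ ≤ R} := rfl
      rw [hset]
      exact Measure.pi_eval_preimage_null _ hGnull
    have hboundae : ∀ᵐ x ∂(Measure.pi fun _ : Fin N => μ),
        empRad N F x ≤ c / Real.sqrt N := hae.mono fun x hx => hpt x hx
    by_cases hint : Integrable (empRad N F) (Measure.pi fun _ : Fin N => μ)
    · have hmono := integral_mono_ae hint (integrable_const (c / Real.sqrt N)) hboundae
      have : RadN μ N F = ∫ x : Fin N → (Fin d → ℝ), empRad N F x
          ∂(Measure.pi fun _ : Fin N => μ) := rfl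
      rw [this]
      refine le_trans hmono ?_
      rw [integral_const]
      simp [measure_univ]
    · have : RadN μ N F = 0 := by
        unfold RadN
        exact integral_undef hint
      rw [this]
      positivity
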